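/- Let b ∈ H^∞ with ‖b‖_∞ ≤ 1 be non-extreme, with pair (b, a), and suppose H(b) = D_ω with equality of norms for some weight ω ∈ L¹(𝔻) with 0 < ‖ω‖_{L¹} < ∞, where ‖f‖²_{D_ω} = ‖f‖²_{H²} + ∫_𝔻 |f'|² ω dA. Then for f ∈ H(b): f⁺ = 0 iff f is constant; consequently the inner factor of b equals z (up to unimodular constant), i.e. b_i H² = z H². -/

import Mathlib

open Complex Metric MeasureTheory Real Filter

/-- `n`-th Taylor coefficient at `0` of a function holomorphic on the unit disk. -/
noncomputable def hcoeff (f : ℂ → ℂ) (n : ℕ) : ℂ := iteratedDeriv n f 0 / (n.factorial : ℂ)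

/-- Membership in the Hardy space `H²` of the unit disk. -/
def MemH2 (f : ℂ → ℂ) : Prop :=
  DifferentiableOn ℂ f (Metric.ball (0 : ℂ) 1) ∧ Summable fun n : ℕ => ‖hcoeff f n‖ ^ 2

/-- The `H²` inner product, conjugate-linear in the first argument. -/
noncomputable def h2inner (f g : ℂ → ℂ) : ℂ :=
  ∑' n : ℕ, (starRingEnd ℂ) (hcoeff f n) * hcoeff g n

/-- `fplus` is the function `f⁺` associated with `f ∈ H(b)`:
`T_{conj b} f = T_{conj a} f⁺`, expressed by testing inner products against
`bg`, `ag` for all `g ∈ H²`. -/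
def IsPlusFn (b a f fplus : ℂ → ℂ) : Prop :=
  ∀ g : ℂ → ℂ, MemH2 g →
    h2inner (fun z => b z * g z) f = h2inner (fun z => a z * g z) fplus

lemma iteratedDeriv_zero_fn (n : ℕ) (x : ℂ) : iteratedDeriv n (fun _ : ℂ => (0:ℂ)) x = 0 := by
  rw [iteratedDeriv_eq_iteratedFDeriv, iteratedFDeriv_zero_fun]; simp

lemma iteratedDeriv_const_succ (n : ℕ) (c x : ℂ) :
    iteratedDeriv (n+1) (fun _ : ℂ => c) x = 0 := by
  rw [iteratedDeriv_succ']
  simp only [deriv_const']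
  exact iteratedDeriv_zero_fn n x

lemma hcoeff_succ_of_const_on_ball (f : ℂ → ℂ) (c : ℂ)
    (hf : ∀ z ∈ ball (0:ℂ) 1, f z = c) (n : ℕ) :
    hcoeff f (n+1) = 0 := by
  have hev : f =ᶠ[nhds (0:ℂ)] (fun _ => c) :=
    eventually_of_mem (isOpen_ball.mem_nhds (by simp)) hf
  unfold hcoeff
  rw [hev.iteratedDeriv_eq, iteratedDeriv_const_succ]
  simp

lemma hcoeff_zero_apply (f : ℂ → ℂ) : hcoeff f 0 = f 0 := by
  unfold hcoeff
  simp [iteratedDeriv_zero]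

lemma hcoeff_of_zero_on_ball (f : ℂ → ℂ) (hf : ∀ z ∈ ball (0:ℂ) 1, f z = 0) (n : ℕ) :
    hcoeff f n = 0 := by
  cases n with
  | zero => rw [hcoeff_zero_apply]; exact hf 0 (by simp)
  | succ m => exact hcoeff_succ_of_const_on_ball f 0 hf m

lemma eq_zero_on_ball_of_hcoeff (f : ℂ → ℂ) (hf : DifferentiableOn ℂ f (ball (0:ℂ) 1))
    (h : ∀ n, hcoeff f n = 0) (z : ℂ) (hz : z ∈ ball (0:ℂ) 1) : f z = 0 := by
  have hd : ∀ n, iteratedDeriv n f 0 = 0 := by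
    intro n
    have := h n
    unfold hcoeff at this
    have hne : ((n.factorial : ℂ)) ≠ 0 := Nat.cast_ne_zero.mpr n.factorial_ne_zero
    field_simp at this
    simpa using this
  have := Complex.taylorSeries_eq_on_ball' hz hf
  simp [hd] at this
  exact this.symm

lemma memH2_const (c : ℂ) : MemH2 (fun _ : ℂ => c) := by
  refine ⟨(differentiable_const c).differentiableOn, ?_⟩
  apply summable_of_ne_finset_zero (s := {0})
  intro n hn
  obtain ⟨m, rfl⟩ := Nat.exists_eq_succ_of_ne_zero (by simpa using hn)
  rw [hcoeff_succ_of_const_on_ball (fun _ => c) c (fun _ _ => rfl)]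
  simp

lemma h2inner_zero_right (F fp : ℂ → ℂ) (hfp : ∀ z ∈ ball (0:ℂ) 1, fp z = 0) :
    h2inner F fp = 0 := by
  unfold h2inner
  have : (fun n : ℕ => (starRingEnd ℂ) (hcoeff F n) * hcoeff fp n) = fun _ => 0 := by
    funext n
    rw [hcoeff_of_zero_on_ball fp hfp n, mul_zero]
  rw [this, tsum_zero]

/-- Constant function on ball: a function that is eventually constant has zero derivative. -/
lemma deriv_zero_of_const_on_ball (f : ℂ → ℂ) (hconst : ∀ z ∈ ball (0:ℂ) 1, f z = f 0)
    (z : ℂ) (hz : z ∈ ball (0:ℂ) 1) : deriv f z = 0 := by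
  have hev : f =ᶠ[nhds z] (fun _ => f 0) :=
    eventually_of_mem (isOpen_ball.mem_nhds hz) hconst
  rw [hev.deriv_eq]
  simp

/-- If the derivative of a holomorphic function on the unit ball vanishes on a set of
positive measure, the function is constant on the ball. -/
lemma const_of_deriv_zero_posmeas (f : ℂ → ℂ) (hf : DifferentiableOn ℂ f (ball (0:ℂ) 1))
    (hS : volume ({z | deriv f z = 0} ∩ ball (0:ℂ) 1) ≠ 0) :
    ∀ z ∈ ball (0:ℂ) 1, f z = f 0 := by
  set S : Set ℂ := {z | deriv f z = 0} ∩ ball (0:ℂ) 1 with hSdef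
  -- cover S by compact pieces
  have hcover : S ⊆ ⋃ n : ℕ, (S ∩ closedBall (0:ℂ) (1 - 1/((n:ℝ)+1))) := by
    intro w hw
    have hw1 : ‖w‖ < 1 := mem_ball_zero_iff.mp hw.2
    obtain ⟨n, hn⟩ := exists_nat_one_div_lt (sub_pos.mpr hw1)
    refine Set.mem_iUnion.mpr ⟨n, hw, mem_closedBall_zero_iff.mpr ?_⟩
    linarith
  obtain ⟨n, hn⟩ : ∃ n : ℕ, volume (S ∩ closedBall (0:ℂ) (1 - 1/((n:ℝ)+1))) ≠ 0 := by
    by_contra h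
    push_neg at h
    exact hS (measure_mono_null hcover (measure_iUnion_null h))
  set T := S ∩ closedBall (0:ℂ) (1 - 1/((n:ℝ)+1)) with hTdef
  have hTinf : T.Infinite := by
    intro hfin
    exact hn (hfin.countable.measure_zero _)
  obtain ⟨x, hxK, hacc⟩ :=
    hTinf.exists_accPt_of_subset_isCompact (isCompact_closedBall _ _) Set.inter_subset_right
  have hxball : x ∈ ball (0:ℂ) 1 := by
    rw [mem_ball_zero_iff]
    have h1 : (0:ℝ) < 1/((n:ℝ)+1) := by positivity
    have := mem_closedBall_zero_iff.mp hxK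
    linarith
  have hfreq : ∃ᶠ y in nhdsWithin x {x}ᶜ, deriv f y = 0 := by
    rw [accPt_iff_frequently] at hacc
    rw [frequently_nhdsWithin_iff]
    exact hacc.mono (fun y hy => ⟨hy.2.1.1, hy.1⟩)
  have hEq : Set.EqOn (deriv f) 0 (ball (0:ℂ) 1) :=
    ((hf.analyticOnNhd isOpen_ball).deriv).eqOn_zero_of_preconnected_of_frequently_eq_zero
      (convex_ball (0:ℂ) 1).isPreconnected hxball hfreq
  -- constant on convex set
  intro z hz
  refine (convex_ball (0:ℂ) 1).is_const_of_fderivWithin_eq_zero hf ?_ hz (by simp)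
  intro w hw
  rw [fderivWithin_of_isOpen isOpen_ball hw]
  have hdz : HasDerivAt f 0 w := by
    have := (hf.differentiableAt (isOpen_ball.mem_nhds hw)).hasDerivAt
    rwa [hEq hw] at this
  have h0 := hdz.hasFDerivAt.fderiv
  rw [h0]
  ext1
  simp

/-- Suppose `b` (non-extreme, with pair `(b,a)`: `a` outer — i.e. `aH²` dense in `H²` —
with `a(0) > 0` and `|a|² + |b|² = 1` a.e. on `𝕋` via radial limits) satisfies
`H(b) = D_ω` with equality of norms, for a weight `ω ∈ L¹(𝔻)` with `0 < ‖ω‖_{L¹} < ∞`,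
i.e. `f ∈ H(b)` iff `∫_𝔻 |f′|² ω dA < ∞`, and then
`‖f‖²_{H²} + ‖f⁺‖²_{H²} = ‖f‖²_{H²} + ∫_𝔻 |f′|² ω dA`. Then for `f ∈ H(b)`: `f⁺ = 0` iff
`f` is constant; consequently the inner factor of `b` is `z`, i.e. `b_i H² = zH²`,
expressed as: `f ⊥ bH²` iff `f` is constant.  -/
theorem stmt_18 (b a : ℂ → ℂ)
    (hbhol : DifferentiableOn ℂ b (ball (0 : ℂ) 1))
    (hbnorm : ∀ z ∈ ball (0 : ℂ) 1, ‖b z‖ ≤ 1)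
    (hahol : DifferentiableOn ℂ a (ball (0 : ℂ) 1))
    (hanorm : ∀ z ∈ ball (0 : ℂ) 1, ‖a z‖ ≤ 1)
    (ha0 : 0 < (a 0).re ∧ (a 0).im = 0)
    (hpair : ∀ᵐ θ ∂(volume.restrict (Set.Ioc (0 : ℝ) (2 * π))),
      Tendsto (fun r : ℝ =>
          ‖a ((r : ℂ) * circleMap 0 1 θ)‖ ^ 2 + ‖b ((r : ℂ) * circleMap 0 1 θ)‖ ^ 2)
        (nhdsWithin 1 (Set.Iio 1)) (nhds 1))
    (houter : ∀ f : ℂ → ℂ, MemH2 f → ∀ ε : ℝ, 0 < ε → ∃ h : ℂ → ℂ, MemH2 h ∧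
      MemH2 (fun z => f z - a z * h z) ∧
      (∑' n : ℕ, ‖hcoeff (fun z => f z - a z * h z) n‖ ^ 2) < ε)
    (ω : ℂ → ℝ) (hωnn : ∀ z ∈ ball (0 : ℂ) 1, 0 ≤ ω z)
    (hωint : IntegrableOn ω (ball (0 : ℂ) 1) volume)
    (hωpos : 0 < ∫ z in ball (0 : ℂ) 1, ω z)
    (hspace : ∀ f : ℂ → ℂ, MemH2 f →
      ((∃ fplus : ℂ → ℂ, MemH2 fplus ∧ IsPlusFn b a f fplus) ↔
        IntegrableOn (fun z => ‖deriv f z‖ ^ 2 * ω z) (ball (0 : ℂ) 1) volume))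
    (hnorm : ∀ f fplus : ℂ → ℂ, MemH2 f → MemH2 fplus → IsPlusFn b a f fplus →
      (∑' n : ℕ, ‖hcoeff f n‖ ^ 2) + ∑' n : ℕ, ‖hcoeff fplus n‖ ^ 2
        = (∑' n : ℕ, ‖hcoeff f n‖ ^ 2) +
            π⁻¹ * ∫ z in ball (0 : ℂ) 1, ‖deriv f z‖ ^ 2 * ω z) :
    (∀ f fplus : ℂ → ℂ, MemH2 f → MemH2 fplus → IsPlusFn b a f fplus →
      ((∀ z ∈ ball (0 : ℂ) 1, fplus z = 0) ↔ ∀ z ∈ ball (0 : ℂ) 1, f z = f 0)) ∧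
    ∀ f : ℂ → ℂ, MemH2 f →
      ((∀ g : ℂ → ℂ, MemH2 g → h2inner (fun z => b z * g z) f = 0) ↔
        ∀ z ∈ ball (0 : ℂ) 1, f z = f 0) := by
  have hball : MeasurableSet (ball (0:ℂ) 1) := measurableSet_ball
  -- the key norm identity
  have key : ∀ f fplus : ℂ → ℂ, MemH2 f → MemH2 fplus → IsPlusFn b a f fplus →
      (∑' n : ℕ, ‖hcoeff fplus n‖ ^ 2)
        = π⁻¹ * ∫ z in ball (0:ℂ) 1, ‖deriv f z‖ ^ 2 * ω z := by
    intro f fplus hf hfp hIs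
    have := hnorm f fplus hf hfp hIs
    linarith
  have part1 : ∀ f fplus : ℂ → ℂ, MemH2 f → MemH2 fplus → IsPlusFn b a f fplus →
      ((∀ z ∈ ball (0 : ℂ) 1, fplus z = 0) ↔ ∀ z ∈ ball (0 : ℂ) 1, f z = f 0) := by
    intro f fplus hf hfp hIs
    constructor
    · -- fplus vanishes ⇒ integral vanishes ⇒ f constant
      intro h0
      have hc : ∀ n, hcoeff fplus n = 0 := hcoeff_of_zero_on_ball fplus h0
      have ht0 : (∑' n : ℕ, ‖hcoeff fplus n‖ ^ 2) = 0 := by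
        simp [hc]
      have hI0 : ∫ z in ball (0:ℂ) 1, ‖deriv f z‖ ^ 2 * ω z = 0 := by
        have hmul : π⁻¹ * ∫ z in ball (0:ℂ) 1, ‖deriv f z‖ ^ 2 * ω z = 0 := by
          rw [← key f fplus hf hfp hIs]; exact ht0
        rcases mul_eq_zero.mp hmul with h | h
        · exact absurd h (inv_ne_zero pi_ne_zero)
        · exact h
      have hint : IntegrableOn (fun z => ‖deriv f z‖ ^ 2 * ω z) (ball (0:ℂ) 1) volume :=
        (hspace f hf).mp ⟨fplus, hfp, hIs⟩
      -- the integrand vanishes a.e. on the ball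
      have hnn' : 0 ≤ᵐ[volume.restrict (ball (0:ℂ) 1)]
          (fun z => ‖deriv f z‖ ^ 2 * ω z) :=
        (ae_restrict_iff' hball).mpr (Filter.Eventually.of_forall
          (fun z hz => mul_nonneg (by positivity) (hωnn z hz)))
      have hae := (integral_eq_zero_iff_of_nonneg_ae hnn' hint).mp hI0
      rw [Filter.EventuallyEq, ae_iff] at hae
      rw [Measure.restrict_apply' hball] at hae
      -- ω is positive on a set of positive measure
      have hP : volume ({z | ω z ≠ 0} ∩ ball (0:ℂ) 1) ≠ 0 := by
        intro hP0
        have hω0 : ω =ᵐ[volume.restrict (ball (0:ℂ) 1)] 0 := by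
          rw [Filter.EventuallyEq, ae_iff, Measure.restrict_apply' hball]
          exact hP0
        have : ∫ z in ball (0:ℂ) 1, ω z = 0 := integral_eq_zero_of_ae hω0
        linarith
      -- hence deriv f vanishes on a set of positive measure
      have hsub : {z | ω z ≠ 0} ∩ ball (0:ℂ) 1 ⊆
          ({z | deriv f z = 0} ∩ ball (0:ℂ) 1) ∪
            ({z | ¬ (fun z => ‖deriv f z‖ ^ 2 * ω z) z = (0:ℂ → ℝ) z} ∩ ball (0:ℂ) 1) := by
        rintro z ⟨hω, hzb⟩
        by_cases hFz : ‖deriv f z‖ ^ 2 * ω z = 0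
        · rcases mul_eq_zero.mp hFz with h | h
          · left
            refine ⟨?_, hzb⟩
            have : ‖deriv f z‖ = 0 := by
              have := pow_eq_zero_iff (n := 2) (by norm_num) |>.mp h
              exact this
            simpa [Set.mem_setOf_eq] using norm_eq_zero.mp this
          · exact absurd h hω
        · right
          exact ⟨by simpa using hFz, hzb⟩
      have hS : volume ({z | deriv f z = 0} ∩ ball (0:ℂ) 1) ≠ 0 := by
        intro hS0
        apply hP
        refine measure_mono_null hsub ?_
        exact le_antisymm (le_trans (measure_union_le _ _) (by rw [hS0, hae]; simp))
          (zero_le)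
      exact const_of_deriv_zero_posmeas f hf.1 hS
    · -- f constant ⇒ integral vanishes ⇒ fplus vanishes
      intro hconst
      have hI0 : ∫ z in ball (0:ℂ) 1, ‖deriv f z‖ ^ 2 * ω z = 0 := by
        rw [setIntegral_congr_fun hball (g := fun _ => (0:ℝ))
          (fun z hz => by rw [deriv_zero_of_const_on_ball f hconst z hz]; simp)]
        exact integral_zero _ _
      have ht0 : (∑' n : ℕ, ‖hcoeff fplus n‖ ^ 2) = 0 := by
        rw [key f fplus hf hfp hIs, hI0, mul_zero]
      have hc : ∀ n, hcoeff fplus n = 0 := by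
        intro n
        have hle := Summable.le_tsum hfp.2 n (fun j _ => by positivity)
        rw [ht0] at hle
        have h0 : ‖hcoeff fplus n‖ ^ 2 = 0 := le_antisymm hle (by positivity)
        have := pow_eq_zero_iff (n := 2) (by norm_num) |>.mp h0
        exact norm_eq_zero.mp this
      exact eq_zero_on_ball_of_hcoeff fplus hfp.1 hc
  refine ⟨part1, ?_⟩
  -- b 0 = 0
  have h1 : MemH2 (fun _ : ℂ => (1:ℂ)) := memH2_const 1
  have hint1 : IntegrableOn (fun z => ‖deriv (fun _ : ℂ => (1:ℂ)) z‖ ^ 2 * ω z)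
      (ball (0:ℂ) 1) volume := by
    have : (fun z => ‖deriv (fun _ : ℂ => (1:ℂ)) z‖ ^ 2 * ω z) = fun _ => (0:ℝ) := by
      funext z; simp
    rw [this]
    exact integrableOn_zero
  obtain ⟨p1, hp1, hIs1⟩ := (hspace _ h1).mpr hint1
  have hp10 : ∀ z ∈ ball (0:ℂ) 1, p1 z = 0 :=
    (part1 _ _ h1 hp1 hIs1).mpr (fun z _ => rfl)
  have hb0 : b 0 = 0 := by
    have heq := hIs1 (fun _ => (1:ℂ)) h1
    rw [h2inner_zero_right _ _ hp10] at heq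
    -- compute the left side
    unfold h2inner at heq
    rw [tsum_eq_single 0 (fun n hn => by
      obtain ⟨m, rfl⟩ := Nat.exists_eq_succ_of_ne_zero hn
      rw [hcoeff_succ_of_const_on_ball (fun _ => (1:ℂ)) 1 (fun _ _ => rfl) m, mul_zero])] at heq
    rw [hcoeff_zero_apply, hcoeff_zero_apply] at heq
    simpa using heq
  intro f hf
  constructor
  · intro hf0
    have hz : MemH2 (fun _ : ℂ => (0:ℂ)) := memH2_const 0
    have hIsf : IsPlusFn b a f (fun _ => (0:ℂ)) := by
      intro g hg
      rw [hf0 g hg, h2inner_zero_right _ _ (fun z _ => rfl)]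
    exact (part1 f _ hf hz hIsf).mp (fun z _ => rfl)
  · intro hconst g hg
    unfold h2inner
    have : (fun n : ℕ => (starRingEnd ℂ) (hcoeff (fun z => b z * g z) n) * hcoeff f n)
        = fun _ => 0 := by
      funext n
      cases n with
      | zero =>
        rw [hcoeff_zero_apply]
        simp [hb0]
      | succ m =>
        rw [hcoeff_succ_of_const_on_ball f (f 0) hconst m, mul_zero]
    rw [this, tsum_zero]
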